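/- Let 0 < δ < 1 and let d ≥ 1, n ≥ d be integers. Let (Δ_i)_{i≥1} be a sequence of real numbers with Δ₁ ≥ 1 and Δ_{i+1} ≥ 2·Δ_i for all i ≥ 1. Let (Q_i)_{i≥1} be independent random subsets of [n], where Q_i includes each element of [n] independently with probability 1 − 2^{−1/Δ_i}. Fix I ⊆ [n] with |I| = d, let i₀ be the least index i with Q_i ∩ I = ∅ (which is almost surely finite), and set D = 2·Δ_{i₀}·log₂(2/δ). Let i₁ be the least index with Δ_{i₁} > 2d/δ. Then: (i) Pr[ d ≤ D ≤ 2·Δ_{i₁}·log₂(2/δ) ] ≥ 1 − δ, and (ii) the expected stopping index satisfies E[i₀] ≤ i₁ + 2. -/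

import Mathlib

open MeasureTheory ProbabilityTheory
open scoped ENNReal

lemma bern_sum_empty {n : ℕ} (q : ℝ) (I : Finset (Fin n)) :
    ∑ s ∈ Finset.univ.filter (fun s : Finset (Fin n) => s ∩ I = ∅),
      ∏ j : Fin n, (if j ∈ s then 1 - q else q) = q ^ I.card := by
  classical
  have hfil : Finset.univ.filter (fun s : Finset (Fin n) => s ∩ I = ∅) = Iᶜ.powerset := by
    ext s
    simp only [Finset.mem_filter, Finset.mem_univ, true_and, Finset.mem_powerset,
      ← Finset.disjoint_iff_inter_eq_empty, ← le_compl_iff_disjoint_right, Finset.le_iff_subset]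
  rw [hfil]
  have key : ∀ s ∈ Iᶜ.powerset,
      (∏ j : Fin n, (if j ∈ s then 1 - q else q))
        = ((∏ j ∈ s, (1 - q)) * ∏ j ∈ Iᶜ \ s, q) * q ^ I.card := by
    intro s hs
    rw [Finset.mem_powerset] at hs
    rw [← Finset.prod_mul_prod_compl Iᶜ, compl_compl]
    congr 1
    · rw [← Finset.prod_sdiff hs, mul_comm]
      congr 1
      · exact Finset.prod_congr rfl fun j hj => by simp [hj]
      · refine Finset.prod_congr rfl fun j hj => ?_
        simp [(Finset.mem_sdiff.mp hj).2]
    · rw [← Finset.prod_const]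
      refine Finset.prod_congr rfl fun j hj => ?_
      have hns : j ∉ s := fun h => (Finset.mem_compl.mp (hs h)) hj
      simp [hns]
  rw [Finset.sum_congr rfl key, ← Finset.sum_mul, ← Finset.prod_add]
  simp

lemma bern_sum_total {n : ℕ} (q : ℝ) :
    ∑ s : Finset (Fin n), ∏ j : Fin n, (if j ∈ s then 1 - q else q) = 1 := by
  classical
  have := bern_sum_empty (n := n) q ∅
  simpa using this

lemma meas_pred_le {n : ℕ} {Ω : Type} [MeasurableSpace Ω] (μ : Measure Ω)
    (f : Ω → Finset (Fin n)) (q : ℝ) (hq0 : 0 ≤ q) (hq1 : q ≤ 1)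
    (hdist : ∀ s : Finset (Fin n), μ {ω | f ω = s}
      = ENNReal.ofReal (∏ j : Fin n, if j ∈ s then 1 - q else q))
    (P : Finset (Fin n) → Prop) [DecidablePred P] :
    μ {ω | P (f ω)} ≤ ENNReal.ofReal
      (∑ s ∈ Finset.univ.filter P, ∏ j : Fin n, if j ∈ s then 1 - q else q) := by
  have hsub : {ω | P (f ω)} ⊆ ⋃ s ∈ Finset.univ.filter P, {ω | f ω = s} := by
    intro ω hω
    simp only [Set.mem_iUnion, Finset.mem_filter, Finset.mem_univ, true_and]
    exact ⟨f ω, hω, rfl⟩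
  calc μ {ω | P (f ω)} ≤ μ (⋃ s ∈ Finset.univ.filter P, {ω | f ω = s}) := measure_mono hsub
    _ ≤ ∑ s ∈ Finset.univ.filter P, μ {ω | f ω = s} := measure_biUnion_finset_le _ _
    _ = ∑ s ∈ Finset.univ.filter P, ENNReal.ofReal (∏ j : Fin n, if j ∈ s then 1 - q else q) :=
        Finset.sum_congr rfl fun s _ => hdist s
    _ = ENNReal.ofReal _ := by
        rw [← ENNReal.ofReal_sum_of_nonneg]
        intro s _
        exact Finset.prod_nonneg fun j _ => by split <;> [linarith; exact hq0]

/-- `μ {f ∩ I = ∅} ≤ q ^ |I|`. -/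
lemma meas_inter_empty_le {n : ℕ} {Ω : Type} [MeasurableSpace Ω] (μ : Measure Ω)
    (f : Ω → Finset (Fin n)) (q : ℝ) (hq0 : 0 ≤ q) (hq1 : q ≤ 1)
    (hdist : ∀ s : Finset (Fin n), μ {ω | f ω = s}
      = ENNReal.ofReal (∏ j : Fin n, if j ∈ s then 1 - q else q))
    (I : Finset (Fin n)) :
    μ {ω | f ω ∩ I = ∅} ≤ ENNReal.ofReal (q ^ I.card) := by
  classical
  have := meas_pred_le μ f q hq0 hq1 hdist (fun s => s ∩ I = ∅)
  rwa [bern_sum_empty] at this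

/-- `μ {f ∩ I ≠ ∅} ≤ 1 - q ^ |I|`. -/
lemma meas_inter_ne_le {n : ℕ} {Ω : Type} [MeasurableSpace Ω] (μ : Measure Ω)
    (f : Ω → Finset (Fin n)) (q : ℝ) (hq0 : 0 ≤ q) (hq1 : q ≤ 1)
    (hdist : ∀ s : Finset (Fin n), μ {ω | f ω = s}
      = ENNReal.ofReal (∏ j : Fin n, if j ∈ s then 1 - q else q))
    (I : Finset (Fin n)) :
    μ {ω | f ω ∩ I ≠ ∅} ≤ ENNReal.ofReal (1 - q ^ I.card) := by
  classical
  have h := meas_pred_le μ f q hq0 hq1 hdist (fun s => ¬ (s ∩ I = ∅))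
  have hsum : ∑ s ∈ Finset.univ.filter (fun s : Finset (Fin n) => ¬ (s ∩ I = ∅)),
      ∏ j : Fin n, (if j ∈ s then 1 - q else q) = 1 - q ^ I.card := by
    have h2 := Finset.sum_filter_add_sum_filter_not Finset.univ
      (fun s : Finset (Fin n) => s ∩ I = ∅)
      (fun s => ∏ j : Fin n, (if j ∈ s then 1 - q else q))
    rw [bern_sum_empty, bern_sum_total] at h2
    linarith
  rwa [hsum] at h

lemma rpow_neg_ge {x : ℝ} (hx : 0 ≤ x) : 1 - x ≤ (2 : ℝ) ^ (-x) := by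
  have h1 : (2 : ℝ) ^ (-x) = Real.exp (Real.log 2 * (-x)) := by
    rw [Real.rpow_def_of_pos two_pos]
  have h2 : Real.log 2 * (-x) + 1 ≤ Real.exp (Real.log 2 * (-x)) := Real.add_one_le_exp _
  have hlog : Real.log 2 ≤ 1 := by
    have := Real.log_two_lt_d9
    linarith
  have hlog0 : 0 ≤ Real.log 2 := Real.log_nonneg one_le_two
  nlinarith


set_option maxHeartbeats 2000000 in
/-- For independent random subsets `Q_i ⊆ [n]` (each element included independently
with probability `1 − 2^{−1/Δ_i}`), with `Δ₁ ≥ 1` and `Δ_{i+1} ≥ 2Δ_i`, a fixed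
`I ⊆ [n]` of size `d`, `i₀` the least index `i ≥ 1` with `Q_i ∩ I = ∅`, and
`D = 2·Δ_{i₀}·log₂(2/δ)`: if `i₁` is the least index with `Δ_{i₁} > 2d/δ`, then
`Pr[d ≤ D ≤ 2·Δ_{i₁}·log₂(2/δ)] ≥ 1 − δ` and `E[i₀] ≤ i₁ + 2`. -/
theorem stmt13 {n : ℕ} (δ : ℝ) (hδ : 0 < δ) (hδ1 : δ < 1)
    (d : ℕ) (hd : 1 ≤ d) (hdn : d ≤ n)
    (Δ : ℕ → ℝ) (hΔ1 : 1 ≤ Δ 1) (hΔ : ∀ i, 1 ≤ i → 2 * Δ i ≤ Δ (i + 1))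
    {Ω : Type} [MeasurableSpace Ω] (μ : Measure Ω) [IsProbabilityMeasure μ]
    (Q : ℕ → Ω → Finset (Fin n))
    (hindep : iIndepFun (m := fun _ => (⊤ : MeasurableSpace (Finset (Fin n)))) Q μ)
    (hdist : ∀ i, 1 ≤ i → ∀ s : Finset (Fin n),
      μ {ω | Q i ω = s} = ENNReal.ofReal (∏ j : Fin n,
        if j ∈ s then 1 - (2 : ℝ) ^ (-(1 / Δ i)) else (2 : ℝ) ^ (-(1 / Δ i))))
    (I : Finset (Fin n)) (hI : I.card = d)
    (i₀ : Ω → ℕ) (hi₀ : ∀ ω, i₀ ω = sInf {i | 1 ≤ i ∧ Q i ω ∩ I = ∅})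
    (D : Ω → ℝ) (hD : ∀ ω, D ω = 2 * Δ (i₀ ω) * Real.logb 2 (2 / δ))
    (i₁ : ℕ) (hi₁1 : 1 ≤ i₁) (hi₁ : 2 * (d : ℝ) / δ < Δ i₁)
    (hi₁min : ∀ i, 1 ≤ i → i < i₁ → Δ i ≤ 2 * (d : ℝ) / δ) :
    ENNReal.ofReal (1 - δ) ≤
        μ {ω | (d : ℝ) ≤ D ω ∧ D ω ≤ 2 * Δ i₁ * Real.logb 2 (2 / δ)} ∧
      ∫⁻ ω, (i₀ ω : ENNReal) ∂μ ≤ (i₁ : ENNReal) + 2 := by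
  classical
  set L : ℝ := Real.logb 2 (2 / δ) with hLdef
  have h2δ : (2 : ℝ) < 2 / δ := by
    rw [lt_div_iff₀ hδ]; nlinarith
  have hδ2pos : (0 : ℝ) < 2 / δ := by positivity
  have hL : 0 < L := Real.logb_pos one_lt_two (by linarith)
  have h2L : (2 : ℝ) ^ (-L) = δ / 2 := by
    rw [Real.rpow_neg (by norm_num : (0:ℝ) ≤ 2), hLdef,
      Real.rpow_logb two_pos (by norm_num) hδ2pos, inv_div]
  -- monotonicity facts for Δ
  have hΔ1' : ∀ i, 1 ≤ i → 1 ≤ Δ i := by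
    intro i hi
    induction i, hi using Nat.le_induction with
    | base => exact hΔ1
    | succ i hi ih => have := hΔ i hi; linarith
  have hΔmono : ∀ i j, 1 ≤ i → i ≤ j → Δ i ≤ Δ j := by
    intro i j hi hij
    induction j, hij using Nat.le_induction with
    | base => exact le_refl _
    | succ j hj ih =>
      have h1j : 1 ≤ j := le_trans hi hj
      have := hΔ j h1j
      have := hΔ1' j h1j
      linarith
  have hΔdouble : ∀ i j, 1 ≤ i → i ≤ j → Δ i * 2 ^ (j - i) ≤ Δ j := by
    intro i j hi hij
    induction j, hij using Nat.le_induction with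
    | base => simp
    | succ j hj ih =>
      have h1j : 1 ≤ j := le_trans hi hj
      have h2 := hΔ j h1j
      have h3 : j + 1 - i = (j - i) + 1 := by omega
      rw [h3, pow_succ]
      have hpow : (0:ℝ) < 2 ^ (j - i) := by positivity
      nlinarith
  -- the per-index probability bounds
  have hq0 : ∀ i, 1 ≤ i → (0:ℝ) ≤ (2 : ℝ) ^ (-(1 / Δ i)) := by
    intro i hi; positivity
  have hq1 : ∀ i, 1 ≤ i → (2 : ℝ) ^ (-(1 / Δ i)) ≤ 1 := by
    intro i hi
    apply Real.rpow_le_one_of_one_le_of_nonpos one_le_two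
    have := hΔ1' i hi
    have : (0:ℝ) < Δ i := by linarith
    simp only [neg_nonpos]
    positivity
  have hqd : ∀ i, 1 ≤ i → ((2 : ℝ) ^ (-(1 / Δ i))) ^ d = (2:ℝ) ^ (-((d:ℝ) / Δ i)) := by
    intro i hi
    rw [← Real.rpow_natCast ((2:ℝ) ^ (-(1 / Δ i))) d, ← Real.rpow_mul (by norm_num : (0:ℝ) ≤ 2)]
    congr 1
    ring
  have hQe : ∀ i, 1 ≤ i →
      μ {ω | Q i ω ∩ I = ∅} ≤ ENNReal.ofReal ((2:ℝ) ^ (-((d:ℝ) / Δ i))) := by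
    intro i hi
    have := meas_inter_empty_le μ (Q i) _ (hq0 i hi) (hq1 i hi) (hdist i hi) I
    rwa [hI, hqd i hi] at this
  have hQne : ∀ i, 1 ≤ i →
      μ {ω | Q i ω ∩ I ≠ ∅} ≤ ENNReal.ofReal (1 - (2:ℝ) ^ (-((d:ℝ) / Δ i))) := by
    intro i hi
    have := meas_inter_ne_le μ (Q i) _ (hq0 i hi) (hq1 i hi) (hdist i hi) I
    rwa [hI, hqd i hi] at this
  constructor
  · -- part (i)
    set E : Set Ω := {ω | (d : ℝ) ≤ D ω ∧ D ω ≤ 2 * Δ i₁ * L} with hE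
    set S : Finset ℕ := (Finset.Icc 1 i₁).filter (fun i => 2 * Δ i * L < d) with hS
    have hΔi₁pos : 0 < Δ i₁ := by linarith [hΔ1' i₁ hi₁1]
    have hSmem : ∀ i, i ∈ S ↔ (1 ≤ i ∧ i ≤ i₁) ∧ 2 * Δ i * L < (d : ℝ) := by
      intro i
      rw [hS]
      simp [Finset.mem_filter, Finset.mem_Icc]
    have hsplit : Eᶜ ⊆ {ω | Q i₁ ω ∩ I ≠ ∅} ∪ ⋃ i ∈ S, {ω | Q i ω ∩ I = ∅} := by
      intro ω hω
      by_cases hc : Q i₁ ω ∩ I = ∅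
      · right
        have hTne : Set.Nonempty {i | 1 ≤ i ∧ Q i ω ∩ I = ∅} := ⟨i₁, hi₁1, hc⟩
        have hkmem : i₀ ω ∈ {i | 1 ≤ i ∧ Q i ω ∩ I = ∅} := by
          rw [hi₀ ω]; exact Nat.sInf_mem hTne
        have hk1 : 1 ≤ i₀ ω := hkmem.1
        have hki₁ : i₀ ω ≤ i₁ := by
          rw [hi₀ ω]; exact Nat.sInf_le ⟨hi₁1, hc⟩
        have hupper : D ω ≤ 2 * Δ i₁ * L := by
          rw [hD ω]
          have := hΔmono (i₀ ω) i₁ hk1 hki₁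
          nlinarith
        have hlower : ¬ ((d : ℝ) ≤ D ω) := by
          intro hle
          exact hω ⟨hle, hupper⟩
        push_neg at hlower
        rw [hD ω] at hlower
        have hkS : i₀ ω ∈ S := (hSmem _).mpr ⟨⟨hk1, hki₁⟩, hlower⟩
        exact Set.mem_biUnion hkS hkmem.2
      · left; exact hc
    have hX : μ {ω | Q i₁ ω ∩ I ≠ ∅} ≤ ENNReal.ofReal (δ / 2) := by
      refine le_trans (hQne i₁ hi₁1) (ENNReal.ofReal_le_ofReal ?_)
      have hy0 : (0:ℝ) ≤ (d : ℝ) / Δ i₁ := by positivity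
      have h1 := rpow_neg_ge hy0
      have hy : (d : ℝ) / Δ i₁ ≤ δ / 2 := by
        rw [div_le_iff₀ hΔi₁pos]
        have : 2 * (d:ℝ) / δ < Δ i₁ := hi₁
        rw [div_lt_iff₀ hδ] at this
        nlinarith
      linarith
    have hSsum : ∑ i ∈ S, (2:ℝ) ^ (-((d:ℝ) / Δ i)) ≤ δ / 2 := by
      rcases S.eq_empty_or_nonempty with hSe | hSne
      · rw [hSe]; simp; linarith
      · set imax := S.max' hSne with himaxdef
        have himaxS : imax ∈ S := S.max'_mem hSne
        have himax' : 1 ≤ imax ∧ imax ≤ i₁ ∧ 2 * Δ imax * L < (d:ℝ) := by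
          have h := (hSmem imax).mp himaxS
          exact ⟨h.1.1, h.1.2, h.2⟩
        have hΔmpos : 0 < Δ imax := by linarith [hΔ1' imax himax'.1]
        have hterm : ∀ i ∈ S, (2:ℝ) ^ (-((d:ℝ) / Δ i))
            ≤ (δ / 2) * (1 / 2) ^ (imax - i + 1) := by
          intro i hiS
          have hi' : 1 ≤ i ∧ i ≤ i₁ ∧ 2 * Δ i * L < (d:ℝ) := by
            have h := (hSmem i).mp hiS
            exact ⟨h.1.1, h.1.2, h.2⟩
          have him : i ≤ imax := S.le_max' i hiS
          set m : ℕ := imax - i with hm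
          have hΔipos : 0 < Δ i := by linarith [hΔ1' i hi'.1]
          have hdou : Δ i * 2 ^ m ≤ Δ imax := hΔdouble i imax hi'.1 him
          have h2L' : 2 * L < (d:ℝ) / Δ imax := by
            rw [lt_div_iff₀ hΔmpos]
            nlinarith [himax'.2.2]
          have hpow : ((m:ℝ) + 1) ≤ 2 ^ m := by
            have := Nat.lt_two_pow_self (n := m)
            exact_mod_cast Nat.succ_le_of_lt this
          have hkey : (d:ℝ) / Δ imax * 2 ^ m ≤ (d:ℝ) / Δ i := by
            rw [div_mul_eq_mul_div, div_le_div_iff₀ hΔmpos hΔipos]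
            have hd0 : (0:ℝ) ≤ (d:ℝ) := by positivity
            nlinarith
          have hexp : (2 * L) * ((m:ℝ) + 1) ≤ (d:ℝ) / Δ i := by
            have hpw0 : (0:ℝ) < 2 ^ m := by positivity
            nlinarith
          have step1 : (2:ℝ) ^ (-((d:ℝ) / Δ i)) ≤ (2:ℝ) ^ (-(2 * L * ((m:ℝ) + 1))) :=
            Real.rpow_le_rpow_of_exponent_le one_le_two (by linarith)
          have step2 : (2:ℝ) ^ (-(2 * L * ((m:ℝ) + 1))) = (δ / 2) ^ (2 * (m + 1)) := by
            rw [show -(2 * L * ((m:ℝ) + 1)) = (-L) * ((2 * (m + 1) : ℕ) : ℝ) by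
              push_cast; ring]
            rw [Real.rpow_mul (by norm_num : (0:ℝ) ≤ 2), Real.rpow_natCast, h2L]
          have hδ20 : (0:ℝ) ≤ δ / 2 := by linarith
          have hδ21 : δ / 2 ≤ 1 / 2 := by linarith
          have e1 : (δ/2) ^ (2 * (m + 1)) = (δ/2) ^ (m+1) * (δ/2) ^ (m+1) := by
            rw [two_mul, pow_add]
          have e2 : (δ/2) ^ (m+1) ≤ δ/2 :=
            pow_le_of_le_one hδ20 (by linarith) (Nat.succ_ne_zero m)
          have e3 : (δ/2) ^ (m+1) ≤ (1/2 : ℝ) ^ (m+1) := pow_le_pow_left₀ hδ20 hδ21 _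
          have e4 : (0:ℝ) ≤ (δ/2) ^ (m+1) := pow_nonneg hδ20 _
          calc (2:ℝ) ^ (-((d:ℝ) / Δ i)) ≤ (δ / 2) ^ (2 * (m + 1)) := by rw [← step2]; exact step1
            _ = (δ/2) ^ (m+1) * (δ/2) ^ (m+1) := e1
            _ ≤ (δ/2) * (1/2 : ℝ) ^ (m+1) := by nlinarith [pow_nonneg (by norm_num : (0:ℝ) ≤ 1/2) (m+1)]
        have hsum2 : ∑ i ∈ S, (δ / 2) * ((1:ℝ) / 2) ^ (imax - i + 1) ≤ δ / 2 := by
          rw [← Finset.mul_sum]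
          have hsub : S ⊆ Finset.Icc 1 imax := by
            intro i hiS
            have hi' : 1 ≤ i := ((hSmem i).mp hiS).1.1
            exact Finset.mem_Icc.mpr ⟨hi', S.le_max' i hiS⟩
          have h1 : ∑ i ∈ S, ((1:ℝ) / 2) ^ (imax - i + 1)
              ≤ ∑ i ∈ Finset.Icc 1 imax, ((1:ℝ) / 2) ^ (imax - i + 1) :=
            Finset.sum_le_sum_of_subset_of_nonneg hsub (fun i _ _ => by positivity)
          have h2 : ∑ i ∈ Finset.Icc 1 imax, ((1:ℝ) / 2) ^ (imax - i + 1)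
              = ∑ m ∈ Finset.range imax, ((1:ℝ) / 2) ^ (m + 1) := by
            refine Finset.sum_nbij' (fun i => imax - i) (fun m => imax - m) ?_ ?_ ?_ ?_ ?_
            · intro a ha
              simp only [Finset.mem_Icc, Finset.mem_range] at ha ⊢
              omega
            · intro a ha
              simp only [Finset.mem_Icc, Finset.mem_range] at ha ⊢
              omega
            · intro a ha
              simp only [Finset.mem_Icc, Finset.mem_range] at ha
              omega
            · intro a ha
              simp only [Finset.mem_Icc, Finset.mem_range] at ha
              omega
            · intro a _; rfl
          have h3 : ∑ m ∈ Finset.range imax, ((1:ℝ) / 2) ^ (m + 1) ≤ 1 := by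
            have := sum_geometric_two_le imax
            have heq : ∑ m ∈ Finset.range imax, ((1:ℝ) / 2) ^ (m + 1)
                = (1/2) * ∑ m ∈ Finset.range imax, ((1:ℝ) / 2) ^ m := by
              rw [Finset.mul_sum]
              exact Finset.sum_congr rfl fun m _ => by ring
            rw [heq]
            linarith
          have : ∑ i ∈ S, ((1:ℝ) / 2) ^ (imax - i + 1) ≤ 1 := by
            rw [h2] at h1; linarith
          nlinarith
        calc ∑ i ∈ S, (2:ℝ) ^ (-((d:ℝ) / Δ i))
            ≤ ∑ i ∈ S, (δ / 2) * ((1:ℝ) / 2) ^ (imax - i + 1) := Finset.sum_le_sum hterm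
          _ ≤ δ / 2 := hsum2
    have hY : μ (⋃ i ∈ S, {ω | Q i ω ∩ I = ∅}) ≤ ENNReal.ofReal (δ / 2) := by
      calc μ (⋃ i ∈ S, {ω | Q i ω ∩ I = ∅})
          ≤ ∑ i ∈ S, μ {ω | Q i ω ∩ I = ∅} := measure_biUnion_finset_le _ _
        _ ≤ ∑ i ∈ S, ENNReal.ofReal ((2:ℝ) ^ (-((d:ℝ) / Δ i))) := by
            refine Finset.sum_le_sum fun i hiS => ?_
            have hi1 : 1 ≤ i := ((hSmem i).mp hiS).1.1
            exact hQe i hi1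
        _ = ENNReal.ofReal (∑ i ∈ S, (2:ℝ) ^ (-((d:ℝ) / Δ i))) := by
            rw [← ENNReal.ofReal_sum_of_nonneg]
            intro i _; positivity
        _ ≤ ENNReal.ofReal (δ / 2) := ENNReal.ofReal_le_ofReal hSsum
    have hEc : μ Eᶜ ≤ ENNReal.ofReal δ := by
      calc μ Eᶜ ≤ μ ({ω | Q i₁ ω ∩ I ≠ ∅} ∪ ⋃ i ∈ S, {ω | Q i ω ∩ I = ∅}) :=
            measure_mono hsplit
        _ ≤ μ {ω | Q i₁ ω ∩ I ≠ ∅} + μ (⋃ i ∈ S, {ω | Q i ω ∩ I = ∅}) := measure_union_le _ _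
        _ ≤ ENNReal.ofReal (δ / 2) + ENNReal.ofReal (δ / 2) := add_le_add hX hY
        _ = ENNReal.ofReal δ := by
            rw [← ENNReal.ofReal_add (by linarith) (by linarith)]
            norm_num
    have hone : (1 : ℝ≥0∞) ≤ μ E + μ Eᶜ := by
      calc (1 : ℝ≥0∞) = μ Set.univ := measure_univ.symm
        _ = μ (E ∪ Eᶜ) := by rw [Set.union_compl_self]
        _ ≤ μ E + μ Eᶜ := measure_union_le _ _
    rw [ENNReal.ofReal_sub _ hδ.le, ENNReal.ofReal_one]
    refine tsub_le_iff_right.mpr ?_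
    calc (1 : ℝ≥0∞) ≤ μ E + μ Eᶜ := hone
      _ ≤ μ E + ENNReal.ofReal δ := add_le_add_right hEc _
  · -- part (ii)
    set C : ℕ → Set Ω := fun k => {ω | k < i₀ ω} with hC
    -- pointwise bound: i₀ ≤ i₁ + number of m with i₁ + m < i₀
    have hpt : ∀ ω, (i₀ ω : ℝ≥0∞) ≤ (i₁ : ℝ≥0∞) +
        ∑' m, (toMeasurable μ (C (i₁ + m))).indicator (fun _ => (1:ℝ≥0∞)) ω := by
      intro ω
      have hnat : i₀ ω ≤ i₁ + (i₀ ω - i₁) := by omega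
      calc (i₀ ω : ℝ≥0∞) ≤ ((i₁ + (i₀ ω - i₁) : ℕ) : ℝ≥0∞) := by exact_mod_cast hnat
        _ = (i₁ : ℝ≥0∞) + ∑ m ∈ Finset.range (i₀ ω - i₁), 1 := by push_cast; simp
        _ ≤ (i₁ : ℝ≥0∞) +
            ∑' m, (toMeasurable μ (C (i₁ + m))).indicator (fun _ => (1:ℝ≥0∞)) ω := by
            refine add_le_add_right ?_ _
            have heq : ∀ m ∈ Finset.range (i₀ ω - i₁),
                (1:ℝ≥0∞) = (toMeasurable μ (C (i₁ + m))).indicator (fun _ => (1:ℝ≥0∞)) ω := by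
              intro m hm
              rw [Finset.mem_range] at hm
              have hωm : ω ∈ C (i₁ + m) := by
                have : i₁ + m < i₀ ω := by omega
                exact this
              rw [Set.indicator_of_mem (subset_toMeasurable μ _ hωm)]
            calc ∑ m ∈ Finset.range (i₀ ω - i₁), (1:ℝ≥0∞)
                = ∑ m ∈ Finset.range (i₀ ω - i₁),
                  (toMeasurable μ (C (i₁ + m))).indicator (fun _ => (1:ℝ≥0∞)) ω :=
                  Finset.sum_congr rfl heq
              _ ≤ ∑' m, (toMeasurable μ (C (i₁ + m))).indicator (fun _ => (1:ℝ≥0∞)) ω :=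
                  ENNReal.sum_le_tsum _
    -- tail bound via independence
    have htail : ∀ m : ℕ, μ (C (i₁ + m)) ≤ (2⁻¹ : ℝ≥0∞) ^ m := by
      intro m
      have hsub : C (i₁ + m) ⊆
          ⋂ i ∈ Finset.Icc i₁ (i₁ + m), (Q i) ⁻¹' {t : Finset (Fin n) | t ∩ I ≠ ∅} := by
        intro ω hω
        simp only [Set.mem_iInter, Set.mem_preimage, Set.mem_setOf_eq]
        intro i hi
        rw [Finset.mem_Icc] at hi
        intro hemp
        have h1i : 1 ≤ i := le_trans hi₁1 hi.1
        have : i₀ ω ≤ i := by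
          rw [hi₀ ω]
          exact Nat.sInf_le ⟨h1i, hemp⟩
        have hlt : i₁ + m < i₀ ω := hω
        omega
      have hprod : μ (⋂ i ∈ Finset.Icc i₁ (i₁ + m),
            (Q i) ⁻¹' {t : Finset (Fin n) | t ∩ I ≠ ∅})
          = ∏ i ∈ Finset.Icc i₁ (i₁ + m), μ ((Q i) ⁻¹' {t : Finset (Fin n) | t ∩ I ≠ ∅}) :=
        hindep.meas_biInter fun i _ =>
          MeasurableSpace.measurableSet_comap.mpr ⟨_, trivial, rfl⟩
      have hfac : ∀ i ∈ Finset.Icc i₁ (i₁ + m),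
          μ ((Q i) ⁻¹' {t : Finset (Fin n) | t ∩ I ≠ ∅}) ≤ (2⁻¹ : ℝ≥0∞) := by
        intro i hi
        rw [Finset.mem_Icc] at hi
        have h1i : 1 ≤ i := le_trans hi₁1 hi.1
        have hΔi : Δ i₁ ≤ Δ i := hΔmono i₁ i hi₁1 hi.1
        have hΔipos : 0 < Δ i := by linarith [hΔ1' i h1i]
        have hpre : (Q i) ⁻¹' {t : Finset (Fin n) | t ∩ I ≠ ∅} = {ω | Q i ω ∩ I ≠ ∅} := rfl
        rw [hpre]
        refine le_trans (hQne i h1i) ?_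
        have hy0 : (0:ℝ) ≤ (d : ℝ) / Δ i := by positivity
        have h1 := rpow_neg_ge hy0
        have hy : (d : ℝ) / Δ i ≤ 1 / 2 := by
          rw [div_le_div_iff₀ hΔipos (by norm_num : (0:ℝ) < 2)]
          have hdd : 2 * (d:ℝ) / δ < Δ i := lt_of_lt_of_le hi₁ hΔi
          rw [div_lt_iff₀ hδ] at hdd
          nlinarith
        have h2 : ENNReal.ofReal (1 - (2:ℝ) ^ (-((d:ℝ) / Δ i))) ≤ ENNReal.ofReal (1/2 : ℝ) :=
          ENNReal.ofReal_le_ofReal (by linarith)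
        refine le_trans h2 ?_
        rw [show (1/2 : ℝ) = (2:ℝ)⁻¹ by norm_num,
          ENNReal.ofReal_inv_of_pos (by norm_num : (0:ℝ) < 2)]
        norm_num
      calc μ (C (i₁ + m))
          ≤ μ (⋂ i ∈ Finset.Icc i₁ (i₁ + m),
              (Q i) ⁻¹' {t : Finset (Fin n) | t ∩ I ≠ ∅}) := measure_mono hsub
        _ = ∏ i ∈ Finset.Icc i₁ (i₁ + m),
              μ ((Q i) ⁻¹' {t : Finset (Fin n) | t ∩ I ≠ ∅}) := hprod
        _ ≤ ∏ _i ∈ Finset.Icc i₁ (i₁ + m), (2⁻¹ : ℝ≥0∞) := Finset.prod_le_prod' hfac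
        _ = (2⁻¹ : ℝ≥0∞) ^ (m + 1) := by
            rw [Finset.prod_const, Nat.card_Icc]
            congr 1
            omega
        _ ≤ (2⁻¹ : ℝ≥0∞) ^ m := by
            rw [pow_succ]
            calc (2⁻¹ : ℝ≥0∞) ^ m * 2⁻¹ ≤ (2⁻¹ : ℝ≥0∞) ^ m * 1 := by
                  gcongr
                  exact ENNReal.inv_le_one.mpr one_le_two
              _ = (2⁻¹ : ℝ≥0∞) ^ m := mul_one _
    -- assemble
    calc ∫⁻ ω, (i₀ ω : ℝ≥0∞) ∂μ
        ≤ ∫⁻ ω, ((i₁ : ℝ≥0∞) +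
            ∑' m, (toMeasurable μ (C (i₁ + m))).indicator (fun _ => (1:ℝ≥0∞)) ω) ∂μ :=
          lintegral_mono fun ω => hpt ω
      _ = (∫⁻ _ω, (i₁ : ℝ≥0∞) ∂μ) +
            ∫⁻ ω, ∑' m, (toMeasurable μ (C (i₁ + m))).indicator (fun _ => (1:ℝ≥0∞)) ω ∂μ :=
          lintegral_add_left measurable_const _
      _ = (i₁ : ℝ≥0∞) +
            ∑' m, ∫⁻ ω, (toMeasurable μ (C (i₁ + m))).indicator (fun _ => (1:ℝ≥0∞)) ω ∂μ := by
          rw [lintegral_const, measure_univ, mul_one,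
            lintegral_tsum fun m =>
              ((measurable_const.indicator (measurableSet_toMeasurable μ _)).aemeasurable)]
      _ = (i₁ : ℝ≥0∞) + ∑' m, μ (C (i₁ + m)) := by
          congr 1
          refine tsum_congr fun m => ?_
          rw [lintegral_indicator (measurableSet_toMeasurable μ _)]
          simp [measure_toMeasurable]
      _ ≤ (i₁ : ℝ≥0∞) + ∑' m, (2⁻¹ : ℝ≥0∞) ^ m := by
          refine add_le_add_right (ENNReal.tsum_le_tsum htail) _
      _ = (i₁ : ℝ≥0∞) + (1 - 2⁻¹)⁻¹ := by rw [ENNReal.tsum_geometric]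
      _ = (i₁ : ℝ≥0∞) + 2 := by
          congr 1
          rw [show (1 : ℝ≥0∞) - 2⁻¹ = 2⁻¹ by
            rw [← ENNReal.inv_two_add_inv_two, ENNReal.add_sub_cancel_right
              (by simp : (2⁻¹ : ℝ≥0∞) ≠ ⊤)]]
          rw [inv_inv]
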